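/- arXiv:1602.00281 — 4 statements merged into one kernel-verified Lean document; each statement's English description precedes it below -/
import Mathlib

section
/- Kadison's inequality: if M is a C*-algebra (or von Neumann algebra) with unit and S : M → M is a positive linear map with S(1) ≤ 1, then S(x)² ≤ S(x²) for every self-adjoint x ∈ M. -/
open Finset in
lemma kadison_jensen_finite {A : Type*} [CStarAlgebra A] [PartialOrder A] [StarOrderedRing A]
    (s : Finset ℕ) (t : ℕ → ℝ) (b : ℕ → A) (hb : ∀ i ∈ s, 0 ≤ b i)
    (hsum : ∑ i ∈ s, b i ≤ 1) :
    (∑ i ∈ s, t i • b i) ^ 2 ≤ ∑ i ∈ s, (t i) ^ 2 • b i := by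
  set c : A := ∑ i ∈ s, t i • b i with hc_def
  have hbsa : ∀ i ∈ s, IsSelfAdjoint (b i) := fun i hi => .of_nonneg (hb i hi)
  have hc : IsSelfAdjoint c := by
    rw [hc_def, IsSelfAdjoint, star_sum]
    exact Finset.sum_congr rfl fun i hi => by
      rw [star_smul, star_trivial, (hbsa i hi).star_eq]
  have key : ∀ i ∈ s, (t i • (1 : A) - c) * b i * (t i • 1 - c)
      = (t i) ^ 2 • b i - t i • (b i * c) - t i • (c * b i) + c * b i * c := by
    intro i _
    simp only [sub_mul, mul_sub, smul_mul_assoc, mul_smul_comm, mul_one, one_mul,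
      smul_smul, sq, smul_add, smul_sub, smul_neg, neg_smul, one_smul]
    module
  have e1 : ∑ i ∈ s, t i • (b i * c) = c * c := by
    calc ∑ i ∈ s, t i • (b i * c) = ∑ i ∈ s, (t i • b i) * c :=
          Finset.sum_congr rfl fun i _ => (smul_mul_assoc _ _ _).symm
      _ = (∑ i ∈ s, t i • b i) * c := (Finset.sum_mul _ _ _).symm
      _ = c * c := by rw [← hc_def]
  have e2 : ∑ i ∈ s, t i • (c * b i) = c * c := by
    calc ∑ i ∈ s, t i • (c * b i) = ∑ i ∈ s, c * (t i • b i) :=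
          Finset.sum_congr rfl fun i _ => (mul_smul_comm _ _ _).symm
      _ = c * (∑ i ∈ s, t i • b i) := (Finset.mul_sum _ _ _).symm
      _ = c * c := by rw [← hc_def]
  have e3 : ∑ i ∈ s, c * b i * c = c * (∑ i ∈ s, b i) * c := by
    calc ∑ i ∈ s, c * b i * c = (∑ i ∈ s, c * b i) * c := (Finset.sum_mul _ _ _).symm
      _ = c * (∑ i ∈ s, b i) * c := by rw [← Finset.mul_sum]
  have sum_eq : ∑ i ∈ s, (t i • (1 : A) - c) * b i * (t i • 1 - c)
      = (∑ i ∈ s, (t i) ^ 2 • b i) - c * c - c * c + c * (∑ i ∈ s, b i) * c := by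
    rw [Finset.sum_congr rfl key, Finset.sum_add_distrib, Finset.sum_sub_distrib,
      Finset.sum_sub_distrib, e1, e2, e3]
  have pos : 0 ≤ ∑ i ∈ s, (t i • (1 : A) - c) * b i * (t i • 1 - c) := by
    refine Finset.sum_nonneg fun i hi => ?_
    have hd : IsSelfAdjoint (t i • (1 : A) - c) := by
      refine IsSelfAdjoint.sub ?_ hc
      rw [IsSelfAdjoint, star_smul, star_trivial, star_one]
    have := star_left_conjugate_nonneg (hb i hi) (t i • (1 : A) - c)
    rwa [hd.star_eq] at this
  have conj : c * (∑ i ∈ s, b i) * c ≤ c * c := by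
    have := star_left_conjugate_le_conjugate hsum c
    rw [hc.star_eq, mul_one] at this
    exact this
  rw [sum_eq] at pos
  have h5 : c * c + (c * c - c * (∑ i ∈ s, b i) * c) ≤ ∑ i ∈ s, (t i) ^ 2 • b i := by
    rw [← sub_nonneg]
    calc (0 : A) ≤ (∑ i ∈ s, (t i) ^ 2 • b i) - c * c - c * c + c * (∑ i ∈ s, b i) * c := pos
      _ = (∑ i ∈ s, (t i) ^ 2 • b i) - (c * c + (c * c - c * (∑ i ∈ s, b i) * c)) := by abel
  calc c ^ 2 = c * c := sq c
    _ ≤ c * c + (c * c - c * (∑ i ∈ s, b i) * c) := le_add_of_nonneg_right (sub_nonneg.2 conj)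
    _ ≤ ∑ i ∈ s, (t i) ^ 2 • b i := h5

lemma kadison_S_norm {A : Type*} [CStarAlgebra A] [PartialOrder A] [StarOrderedRing A]
    (S : A →ₗ[ℂ] A) (hpos : ∀ a : A, 0 ≤ a → 0 ≤ S a) (h1 : S 1 ≤ 1)
    {d : A} (hd : IsSelfAdjoint d) : ‖S d‖ ≤ 3 * ‖d‖ := by
  have mono : ∀ a b : A, a ≤ b → S a ≤ S b := fun a b h => by
    have := hpos _ (sub_nonneg.2 h)
    rw [map_sub] at this
    exact sub_nonneg.1 this
  have halg : ∀ r : ℝ, S (algebraMap ℝ A r) = r • S 1 := fun r => by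
    rw [Algebra.algebraMap_eq_smul_one, S.map_smul_of_tower]
  have hS1 : 0 ≤ S 1 := hpos 1 zero_le_one
  have e : S (d + algebraMap ℝ A ‖d‖) = S d + ‖d‖ • S 1 := by rw [map_add, halg]
  have k1 : 0 ≤ S (d + algebraMap ℝ A ‖d‖) := by
    refine hpos _ ?_
    have h := hd.neg_algebraMap_norm_le_self
    calc (0 : A) = -(algebraMap ℝ A ‖d‖) + algebraMap ℝ A ‖d‖ := by simp
      _ ≤ d + algebraMap ℝ A ‖d‖ := add_le_add_left h _
  have k2 : S (d + algebraMap ℝ A ‖d‖) ≤ algebraMap ℝ A (2 * ‖d‖) := by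
    have e4 : algebraMap ℝ A ‖d‖ + algebraMap ℝ A ‖d‖ = algebraMap ℝ A (2 * ‖d‖) := by
      rw [two_mul, map_add]
    calc S (d + algebraMap ℝ A ‖d‖)
        ≤ S (algebraMap ℝ A ‖d‖ + algebraMap ℝ A ‖d‖) :=
          mono _ _ (add_le_add_left hd.le_algebraMap_norm_self _)
      _ = (2 * ‖d‖) • S 1 := by rw [e4, halg]
      _ ≤ (2 * ‖d‖) • (1 : A) := smul_le_smul_of_nonneg_left h1 (by positivity)
      _ = algebraMap ℝ A (2 * ‖d‖) := (Algebra.algebraMap_eq_smul_one _).symm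
  have knorm : ‖S (d + algebraMap ℝ A ‖d‖)‖ ≤ 2 * ‖d‖ :=
    (CStarAlgebra.norm_le_iff_le_algebraMap _ (by positivity) k1).2 k2
  have hS1n : ‖S 1‖ ≤ 1 := (CStarAlgebra.norm_le_one_iff_of_nonneg _ hS1).2 h1
  calc ‖S d‖ = ‖S (d + algebraMap ℝ A ‖d‖) - ‖d‖ • S 1‖ := by rw [e]; congr 1; abel
    _ ≤ ‖S (d + algebraMap ℝ A ‖d‖)‖ + ‖‖d‖ • S 1‖ := norm_sub_le _ _
    _ ≤ 2 * ‖d‖ + ‖d‖ * 1 := by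
        refine add_le_add knorm ?_
        rw [norm_smul, Real.norm_eq_abs, abs_norm]
        exact mul_le_mul_of_nonneg_left hS1n (norm_nonneg d)
    _ = 3 * ‖d‖ := by ring

open Finset in
lemma kadison_approx {A : Type*} [CStarAlgebra A] [PartialOrder A] [StarOrderedRing A]
    [Nontrivial A] {x : A} (hx : IsSelfAdjoint x) {δ : ℝ} (hδ : 0 < δ) :
    ∃ (N : ℕ) (a : ℕ → A) (cc : ℕ → ℝ),
      (∀ i, 0 ≤ a i) ∧ (∑ i ∈ Finset.range N, a i = 1) ∧
      ‖x - ∑ i ∈ Finset.range N, cc i • a i‖ ≤ δ ∧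
      ‖x ^ 2 - ∑ i ∈ Finset.range N, (cc i) ^ 2 • a i‖ ≤ δ * (2 * ‖x‖ + δ) := by
  set r := ‖x‖ with hr
  have hr0 : 0 ≤ r := norm_nonneg x
  set g : ℝ → ℝ := fun u => max 0 (min 1 u) with hgdef
  have hg_cont : Continuous g := continuous_const.max (continuous_const.min continuous_id)
  have hg_mono : Monotone g := fun u v huv => max_le_max le_rfl (min_le_min le_rfl huv)
  have hg0 : ∀ u : ℝ, u ≤ 0 → g u = 0 := fun u hu =>
    max_eq_left ((min_le_right 1 u).trans hu)
  have hg1 : ∀ u : ℝ, 1 ≤ u → g u = 1 := fun u hu => by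
    simp only [hgdef, min_eq_left hu]
    exact max_eq_right zero_le_one
  set N : ℕ := ⌈2 * r / δ⌉₊ + 1 with hN
  set cc : ℕ → ℝ := fun i => i * δ - r with hcc
  set f : ℕ → ℝ → ℝ := fun i t => g ((t + r) / δ + 1 - i) - g ((t + r) / δ - i) with hfdef
  have hf_cont : ∀ i, Continuous (f i) := fun i =>
    (hg_cont.comp (by fun_prop)).sub (hg_cont.comp (by fun_prop))
  have hf_nonneg : ∀ i t, 0 ≤ f i t := fun i t =>
    sub_nonneg.2 (hg_mono (by linarith))
  -- telescoping sum equals 1 on [-r, r]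
  have hf_sum : ∀ t : ℝ, t ∈ Set.Icc (-r) r → ∑ i ∈ Finset.range N, f i t = 1 := by
    intro t ht
    obtain ⟨ht1, ht2⟩ := ht
    have htr : 0 ≤ (t + r) / δ := div_nonneg (by linarith) hδ.le
    have tele : ∑ i ∈ Finset.range N, f i t
        = g ((t + r) / δ + 1 - (0 : ℕ)) - g ((t + r) / δ + 1 - (N : ℕ)) := by
      rw [Finset.sum_congr rfl (fun i _ =>
        show f i t = (fun j : ℕ => g ((t + r) / δ + 1 - j)) i
          - (fun j : ℕ => g ((t + r) / δ + 1 - j)) (i + 1) from by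
        simp only [hfdef]
        push_cast
        ring_nf)]
      exact Finset.sum_range_sub' (fun j : ℕ => g ((t + r) / δ + 1 - j)) N
    have hceil : 2 * r / δ ≤ (⌈2 * r / δ⌉₊ : ℝ) := Nat.le_ceil _
    have hdiv : (t + r) / δ ≤ 2 * r / δ := by gcongr <;> linarith
    rw [tele, hg1 _ (by push_cast; linarith), hg0 _ (by push_cast [hN]; linarith)]
    norm_num
  -- support of the hat functions
  have hf_supp : ∀ (i : ℕ) (t : ℝ), f i t ≠ 0 → |t - cc i| ≤ δ := by
    intro i t hne
    by_contra habs
    push_neg at habs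
    have hcci : cc i = i * δ - r := rfl
    rcases lt_abs.1 habs with h | h
    · -- t - cc i > δ : both args of g are ≥ 1, so f i t = 0
      have h1 : (i : ℝ) + 1 ≤ (t + r) / δ := by
        rw [le_div_iff₀ hδ]
        rw [hcci] at h
        nlinarith
      refine hne ?_
      simp only [hfdef]
      rw [hg1 _ (by linarith), hg1 _ (by linarith)]
      ring
    · -- cc i - t > δ : both args of g are ≤ 0
      have h2 : (t + r) / δ ≤ (i : ℝ) - 1 := by
        rw [div_le_iff₀ hδ]
        rw [hcci] at h
        nlinarith
      refine hne ?_
      simp only [hfdef]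
      rw [hg0 _ (by linarith), hg0 _ (by linarith)]
      ring
  -- spectrum is contained in [-r, r]
  have hspec : ∀ t ∈ spectrum ℝ x, t ∈ Set.Icc (-r) r := by
    intro t ht
    have := spectrum.norm_le_norm_of_mem ht
    rw [Real.norm_eq_abs] at this
    exact ⟨(abs_le.1 this).1, (abs_le.1 this).2⟩
  -- pointwise estimates
  have E1 : ∀ t ∈ spectrum ℝ x, |t - ∑ i ∈ Finset.range N, cc i * f i t| ≤ δ := by
    intro t ht
    have hsum1 := hf_sum t (hspec t ht)
    have expand : t - ∑ i ∈ Finset.range N, cc i * f i t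
        = ∑ i ∈ Finset.range N, (t - cc i) * f i t := by
      rw [Finset.sum_congr rfl (fun i _ => sub_mul t (cc i) (f i t)),
        Finset.sum_sub_distrib, ← Finset.mul_sum, hsum1, mul_one]
    rw [expand]
    calc |∑ i ∈ Finset.range N, (t - cc i) * f i t|
        ≤ ∑ i ∈ Finset.range N, |(t - cc i) * f i t| := Finset.abs_sum_le_sum_abs _ _
      _ ≤ ∑ i ∈ Finset.range N, δ * f i t := by
          refine Finset.sum_le_sum fun i _ => ?_
          rw [abs_mul, abs_of_nonneg (hf_nonneg i t)]
          rcases eq_or_ne (f i t) 0 with h0 | h0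
          · simp [h0]
          · exact mul_le_mul_of_nonneg_right (hf_supp i t h0) (hf_nonneg i t)
      _ = δ := by rw [← Finset.mul_sum, hsum1, mul_one]
  have E2 : ∀ t ∈ spectrum ℝ x,
      |t ^ 2 - ∑ i ∈ Finset.range N, (cc i) ^ 2 * f i t| ≤ δ * (2 * r + δ) := by
    intro t ht
    have htI := hspec t ht
    have htabs : |t| ≤ r := abs_le.2 ⟨htI.1, htI.2⟩
    have hsum1 := hf_sum t htI
    have expand : t ^ 2 - ∑ i ∈ Finset.range N, (cc i) ^ 2 * f i t
        = ∑ i ∈ Finset.range N, (t ^ 2 - (cc i) ^ 2) * f i t := by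
      rw [Finset.sum_congr rfl (fun i _ => sub_mul (t ^ 2) ((cc i) ^ 2) (f i t)),
        Finset.sum_sub_distrib, ← Finset.mul_sum, hsum1, mul_one]
    rw [expand]
    calc |∑ i ∈ Finset.range N, (t ^ 2 - (cc i) ^ 2) * f i t|
        ≤ ∑ i ∈ Finset.range N, |(t ^ 2 - (cc i) ^ 2) * f i t| :=
          Finset.abs_sum_le_sum_abs _ _
      _ ≤ ∑ i ∈ Finset.range N, (δ * (2 * r + δ)) * f i t := by
          refine Finset.sum_le_sum fun i _ => ?_
          rw [abs_mul, abs_of_nonneg (hf_nonneg i t)]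
          rcases eq_or_ne (f i t) 0 with h0 | h0
          · simp [h0]
          · refine mul_le_mul_of_nonneg_right ?_ (hf_nonneg i t)
            have hsupp := hf_supp i t h0
            have hcc_abs : |cc i| ≤ r + δ := by
              calc |cc i| = |(cc i - t) + t| := by ring_nf
                _ ≤ |cc i - t| + |t| := abs_add_le _ _
                _ = |t - cc i| + |t| := by rw [abs_sub_comm]
                _ ≤ δ + r := add_le_add hsupp htabs
                _ = r + δ := by ring
            calc |t ^ 2 - (cc i) ^ 2| = |t - cc i| * |t + cc i| := by
                  rw [← abs_mul]; congr 1; ring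
              _ ≤ δ * (2 * r + δ) := by
                  refine mul_le_mul hsupp ?_ (abs_nonneg _) hδ.le
                  calc |t + cc i| ≤ |t| + |cc i| := abs_add_le _ _
                    _ ≤ 2 * r + δ := by linarith
      _ = δ * (2 * r + δ) := by rw [← Finset.mul_sum, hsum1, mul_one]
  -- now pass to the continuous functional calculus
  refine ⟨N, fun i => cfc (f i) x, cc, ?_, ?_, ?_, ?_⟩
  · exact fun i => cfc_nonneg fun t _ => hf_nonneg i t
  · rw [← cfc_sum f x (Finset.range N) fun i _ => (hf_cont i).continuousOn]
    have h1 : cfc (∑ i ∈ Finset.range N, f i) x = cfc (1 : ℝ → ℝ) x :=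
      cfc_congr fun t ht => by
        simpa [Finset.sum_apply] using hf_sum t (hspec t ht)
    rw [h1, cfc_one ℝ x]
  · have e1 : ∑ i ∈ Finset.range N, cc i • cfc (f i) x
        = cfc (fun t => ∑ i ∈ Finset.range N, cc i * f i t) x := by
      rw [Finset.sum_congr rfl (fun i (_ : i ∈ Finset.range N) =>
        (cfc_const_mul (cc i) (f i) x (hf_cont i).continuousOn).symm),
        ← cfc_sum (fun i t => cc i * f i t) x (Finset.range N)
          (fun i _ => ((continuous_const.mul (hf_cont i)).continuousOn))]
      congr 1
      ext t
      simp [Finset.sum_apply]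
    have e2 : x - cfc (fun t => ∑ i ∈ Finset.range N, cc i * f i t) x
        = cfc (fun t : ℝ => t - ∑ i ∈ Finset.range N, cc i * f i t) x := by
      rw [cfc_sub (fun t : ℝ => t) (fun t => ∑ i ∈ Finset.range N, cc i * f i t) x
        continuous_id.continuousOn
        (continuous_finset_sum _ fun i _ => continuous_const.mul (hf_cont i)).continuousOn,
        cfc_id' ℝ x]
    rw [e1, e2]
    exact norm_cfc_le hδ.le fun t ht => by
      rw [Real.norm_eq_abs]; exact E1 t ht
  · have e1 : ∑ i ∈ Finset.range N, (cc i) ^ 2 • cfc (f i) x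
        = cfc (fun t => ∑ i ∈ Finset.range N, (cc i) ^ 2 * f i t) x := by
      rw [Finset.sum_congr rfl (fun i (_ : i ∈ Finset.range N) =>
        (cfc_const_mul ((cc i) ^ 2) (f i) x (hf_cont i).continuousOn).symm),
        ← cfc_sum (fun i t => (cc i) ^ 2 * f i t) x (Finset.range N)
          (fun i _ => ((continuous_const.mul (hf_cont i)).continuousOn))]
      congr 1
      ext t
      simp [Finset.sum_apply]
    have e2 : x ^ 2 - cfc (fun t => ∑ i ∈ Finset.range N, (cc i) ^ 2 * f i t) x
        = cfc (fun t : ℝ => t ^ 2 - ∑ i ∈ Finset.range N, (cc i) ^ 2 * f i t) x := by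
      rw [cfc_sub (fun t : ℝ => t ^ 2) (fun t => ∑ i ∈ Finset.range N, (cc i) ^ 2 * f i t) x
        (continuous_pow 2).continuousOn
        (continuous_finset_sum _ fun i _ => continuous_const.mul (hf_cont i)).continuousOn,
        cfc_pow_id x 2]
    rw [e1, e2]
    exact norm_cfc_le (by positivity) fun t ht => by
      rw [Real.norm_eq_abs]; exact E2 t ht

theorem kadison_inequality {M : Type*} [NormedRing M] [StarRing M] [CStarRing M]
    [PartialOrder M] [StarOrderedRing M] [CompleteSpace M] [NormedAlgebra ℂ M]
    [StarModule ℂ M]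
    (S : M →ₗ[ℂ] M)
    (hpos : ∀ a : M, 0 ≤ a → 0 ≤ S a)
    (h1 : S 1 ≤ 1) :
    ∀ x : M, IsSelfAdjoint x → (S x) ^ 2 ≤ S (x ^ 2) := by
  letI : CStarAlgebra M :=
    { ‹NormedRing M›, ‹StarRing M›, ‹CompleteSpace M›, ‹CStarRing M›,
      ‹NormedAlgebra ℂ M›, ‹StarModule ℂ M› with }
  intro x hxsa
  rcases subsingleton_or_nontrivial M with hsub | hnt
  · exact (Subsingleton.elim _ _).le
  have key : ∀ n : ℕ, ∃ u v : M, IsSelfAdjoint u ∧ IsSelfAdjoint v ∧ (S u) ^ 2 ≤ S v ∧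
      ‖x - u‖ ≤ 1 / ((n : ℝ) + 1) ∧
      ‖x ^ 2 - v‖ ≤ (1 / ((n : ℝ) + 1)) * (2 * ‖x‖ + 1 / ((n : ℝ) + 1)) := by
    intro n
    have hδ : (0 : ℝ) < 1 / ((n : ℝ) + 1) := by positivity
    obtain ⟨N, a, cc, ha0, hsum1, hax, hax2⟩ := kadison_approx hxsa hδ
    have hasa : ∀ i, IsSelfAdjoint (a i) := fun i => .of_nonneg (ha0 i)
    have smul_sa : ∀ (t : ℝ) (i : ℕ), IsSelfAdjoint (t • a i) := fun t i => by
      rw [IsSelfAdjoint, star_smul, star_trivial, (hasa i).star_eq]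
    refine ⟨∑ i ∈ Finset.range N, cc i • a i, ∑ i ∈ Finset.range N, (cc i) ^ 2 • a i,
      ?_, ?_, ?_, hax, hax2⟩
    · rw [IsSelfAdjoint, star_sum]
      exact Finset.sum_congr rfl fun i _ => smul_sa (cc i) i
    · rw [IsSelfAdjoint, star_sum]
      exact Finset.sum_congr rfl fun i _ => smul_sa ((cc i) ^ 2) i
    · have hSu : S (∑ i ∈ Finset.range N, cc i • a i)
          = ∑ i ∈ Finset.range N, cc i • S (a i) := by
        rw [map_sum]
        exact Finset.sum_congr rfl fun i _ => S.map_smul_of_tower (cc i) (a i)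
      have hSv : S (∑ i ∈ Finset.range N, (cc i) ^ 2 • a i)
          = ∑ i ∈ Finset.range N, (cc i) ^ 2 • S (a i) := by
        rw [map_sum]
        exact Finset.sum_congr rfl fun i _ => S.map_smul_of_tower ((cc i) ^ 2) (a i)
      rw [hSu, hSv]
      refine kadison_jensen_finite _ _ _ (fun i _ => hpos _ (ha0 i)) ?_
      rw [← map_sum, hsum1]
      exact h1
  choose u v husa hvsa hle hxu hxv using key
  have h0 : Filter.Tendsto (fun n : ℕ => 1 / ((n : ℝ) + 1)) Filter.atTop (nhds 0) :=
    tendsto_one_div_add_atTop_nhds_zero_nat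
  have hSu : Filter.Tendsto (fun n => S (u n)) Filter.atTop (nhds (S x)) := by
    rw [tendsto_iff_norm_sub_tendsto_zero]
    refine squeeze_zero (fun n => norm_nonneg _) (fun n => ?_) (by simpa using h0.const_mul 3)
    calc ‖S (u n) - S x‖ = ‖S (u n - x)‖ := by rw [map_sub]
      _ ≤ 3 * ‖u n - x‖ := kadison_S_norm S hpos h1 ((husa n).sub hxsa)
      _ ≤ 3 * (1 / ((n : ℝ) + 1)) := by
          rw [norm_sub_rev]
          exact mul_le_mul_of_nonneg_left (hxu n) (by norm_num)
      _ = 3 * ((n : ℝ) + 1)⁻¹ := by rw [one_div]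
  have hSu2 : Filter.Tendsto (fun n => (S (u n)) ^ 2) Filter.atTop (nhds ((S x) ^ 2)) := by
    simpa [sq] using hSu.mul hSu
  have hSv : Filter.Tendsto (fun n => S (v n)) Filter.atTop (nhds (S (x ^ 2))) := by
    rw [tendsto_iff_norm_sub_tendsto_zero]
    have hbnd : Filter.Tendsto
        (fun n : ℕ => 3 * ((1 / ((n : ℝ) + 1)) * (2 * ‖x‖ + 1 / ((n : ℝ) + 1))))
        Filter.atTop (nhds 0) := by
      have := (h0.mul ((tendsto_const_nhds (x := 2 * ‖x‖)).add h0)).const_mul 3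
      simpa using this
    refine squeeze_zero (fun n => norm_nonneg _) (fun n => ?_) hbnd
    calc ‖S (v n) - S (x ^ 2)‖ = ‖S (v n - x ^ 2)‖ := by rw [map_sub]
      _ ≤ 3 * ‖v n - x ^ 2‖ := kadison_S_norm S hpos h1 ((hvsa n).sub (hxsa.pow 2))
      _ ≤ 3 * ((1 / ((n : ℝ) + 1)) * (2 * ‖x‖ + 1 / ((n : ℝ) + 1))) := by
          rw [norm_sub_rev]
          exact mul_le_mul_of_nonneg_left (hxv n) (by norm_num)
  exact le_of_tendsto_of_tendsto' hSu2 hSv hle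
end

section
/- Let (X, ‖·‖) be a Banach space, let (L⁰, topology of convergence in measure) be the space of measurable functions (or τ-measurable operators), and let A_n : X → L⁰ be a sequence of additive maps that is uniformly equicontinuous in measure at zero on X. Then the set C = { x ∈ X : (A_n(x)) converges almost uniformly } is closed in X. -/
open MeasureTheory Filter
open scoped ENNReal NNReal

theorem uem_closed_convergence_set {X : Type*} [NormedAddCommGroup X] [CompleteSpace X]
    {Ω : Type*} [MeasurableSpace Ω] (μ : Measure Ω)
    (A : ℕ → X → Ω → ℝ)
    (hadd : ∀ n : ℕ, ∀ x y : X, A n (x + y) = A n x + A n y)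
    (huem : ∀ ε > (0:ℝ), ∀ δ > (0:ℝ), ∃ γ > (0:ℝ), ∀ x : X, ‖x‖ < γ →
      ∃ E : Set Ω, MeasurableSet E ∧ μ Eᶜ ≤ ENNReal.ofReal ε ∧
        ∀ n : ℕ, ∀ ω ∈ E, |A n x ω| ≤ δ) :
    IsClosed {x : X | ∃ g : Ω → ℝ, ∀ ε > (0:ℝ),
      ∃ E : Set Ω, MeasurableSet E ∧ μ Eᶜ ≤ ENNReal.ofReal ε ∧
        TendstoUniformlyOn (fun n => A n x) g atTop E} := by
  apply isClosed_of_closure_subset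
  intro x hx
  rw [Metric.mem_closure_iff] at hx
  -- Key claim: almost uniform Cauchy estimates for `A n x`
  have key : ∀ ε' > (0:ℝ), ∀ δ > (0:ℝ), ∃ E : Set Ω, MeasurableSet E ∧
      μ Eᶜ ≤ ENNReal.ofReal ε' ∧ ∃ N : ℕ, ∀ m ≥ N, ∀ n ≥ N, ∀ ω ∈ E,
        dist (A m x ω) (A n x ω) ≤ δ := by
    intro ε' hε' δ hδ
    obtain ⟨γ, hγ, hγ'⟩ := huem (ε' / 2) (by linarith) (δ / 4) (by linarith)
    obtain ⟨y, hyC, hxy⟩ := hx γ hγ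
    obtain ⟨gy, hgy⟩ := hyC
    obtain ⟨F, hFmeas, hFμ, hFunif⟩ := hgy (ε' / 2) (by linarith)
    have hnorm : ‖x - y‖ < γ := by rwa [← dist_eq_norm]
    obtain ⟨G, hGmeas, hGμ, hGbd⟩ := hγ' (x - y) hnorm
    -- decomposition
    have hdec : ∀ n ω, A n x ω = A n (x - y) ω + A n y ω := by
      intro n ω
      have h := hadd n (x - y) y
      rw [sub_add_cancel] at h
      rw [h]; rfl
    rw [Metric.tendstoUniformlyOn_iff] at hFunif
    obtain ⟨N, hN⟩ := (hFunif (δ / 4) (by linarith)).exists_forall_of_atTop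
    refine ⟨F ∩ G, hFmeas.inter hGmeas, ?_, N, ?_⟩
    · rw [Set.compl_inter]
      calc μ (Fᶜ ∪ Gᶜ) ≤ μ Fᶜ + μ Gᶜ := measure_union_le _ _
        _ ≤ ENNReal.ofReal (ε' / 2) + ENNReal.ofReal (ε' / 2) := add_le_add hFμ hGμ
        _ = ENNReal.ofReal ε' := by
            rw [← ENNReal.ofReal_add (by linarith) (by linarith)]; ring_nf
    · intro m hm n hn ω hω
      have h1 := hGbd m ω hω.2
      have h2 := hGbd n ω hω.2
      have h3 := hN m hm ω hω.1
      have h4 := hN n hn ω hω.1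
      rw [Real.dist_eq] at h3 h4 ⊢
      rw [hdec m ω, hdec n ω]
      have : |A m (x - y) ω + A m y ω - (A n (x - y) ω + A n y ω)|
          ≤ |A m (x - y) ω| + |A n (x - y) ω| + |gy ω - A m y ω| + |gy ω - A n y ω| := by
        have habs : A m (x - y) ω + A m y ω - (A n (x - y) ω + A n y ω)
            = A m (x - y) ω + (- (A n (x - y) ω)) + (-(gy ω - A m y ω)) + (gy ω - A n y ω) := by
          ring
        rw [habs]
        calc _ ≤ |A m (x - y) ω + (- (A n (x - y) ω)) + (-(gy ω - A m y ω))|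
              + |gy ω - A n y ω| := abs_add_le _ _
          _ ≤ |A m (x - y) ω + (- (A n (x - y) ω))| + |(-(gy ω - A m y ω))|
              + |gy ω - A n y ω| := by gcongr; exact abs_add_le _ _
          _ ≤ |A m (x - y) ω| + |(- (A n (x - y) ω))| + |(-(gy ω - A m y ω))|
              + |gy ω - A n y ω| := by gcongr; exact abs_add_le _ _
          _ = |A m (x - y) ω| + |A n (x - y) ω| + |gy ω - A m y ω| + |gy ω - A n y ω| := by
              rw [abs_neg, abs_neg]
      linarith
  -- the candidate limit function
  refine ⟨fun ω => limUnder atTop (fun n => A n x ω), ?_⟩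
  intro ε hε
  have hε0 : ENNReal.ofReal ε ≠ 0 := (ENNReal.ofReal_pos.mpr hε).ne'
  obtain ⟨ε', hε'pos, hε'sum⟩ := ENNReal.exists_pos_sum_of_countable hε0 ℕ
  choose E hEmeas hEμ N hECauchy using fun j : ℕ =>
    key (ε' j : ℝ) (by exact_mod_cast hε'pos j) (1 / (j + 1)) (Nat.one_div_pos_of_nat)
  refine ⟨⋂ j, E j, MeasurableSet.iInter hEmeas, ?_, ?_⟩
  · rw [Set.compl_iInter]
    calc μ (⋃ j, (E j)ᶜ) ≤ ∑' j, μ (E j)ᶜ := measure_iUnion_le _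
      _ ≤ ∑' j, (ε' j : ℝ≥0∞) := ENNReal.tsum_le_tsum fun j => by
            simpa [ENNReal.ofReal_coe_nnreal] using hEμ j
      _ ≤ ENNReal.ofReal ε := hε'sum.le
  · have hUC : UniformCauchySeqOn (fun n => A n x) atTop (⋂ j, E j) := by
      rw [Metric.uniformCauchySeqOn_iff]
      intro δ hδ
      obtain ⟨j, hj⟩ := exists_nat_one_div_lt hδ
      refine ⟨N j, fun m hm n hn ω hω => ?_⟩
      exact lt_of_le_of_lt
        (hECauchy j m hm n hn ω (Set.mem_iInter.mp hω j)) (by exact_mod_cast hj)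
    have hpt : ∀ ω ∈ ⋂ j, E j, Tendsto (fun n => A n x ω) atTop
        (nhds (limUnder atTop (fun n => A n x ω))) := by
      intro ω hω
      apply CauchySeq.tendsto_limUnder
      rw [Metric.cauchySeq_iff]
      intro δ hδ
      obtain ⟨j, hj⟩ := exists_nat_one_div_lt hδ
      refine ⟨N j, fun m hm n hn => ?_⟩
      exact lt_of_le_of_lt
        (hECauchy j m hm n hn ω (Set.mem_iInter.mp hω j)) (by exact_mod_cast hj)
    exact hUC.tendstoUniformlyOn_of_tendsto hpt
end

section
/- Let T be a positive Dunford–Schwartz operator on a σ-finite measure space (positive linear, ‖Tf‖₁ ≤ ‖f‖₁ and ‖Tf‖_∞ ≤ ‖f‖_∞), and let Φ be an Orlicz function. Then the ergodic averages A_n(f) = (1/n)∑_{k=0}^{n-1} T^k f, viewed as maps from the Orlicz space L^Φ (with Luxemburg norm) into L⁰, are uniformly equicontinuous in measure at zero: for every ε > 0 and δ > 0 there is γ > 0 such that whenever ‖f‖_Φ ≤ γ there is a measurable set E with μ(Eᶜ) ≤ ε and sup_n ‖χ_E A_n(|f|) χ_E‖_∞ ≤ δ. -/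
open MeasureTheory Finset

/-- The Luxemburg norm of `f` with respect to the Orlicz function `Φ`. -/
noncomputable def luxemburgNorm {α : Type*} [MeasurableSpace α] (μ : Measure α)
    (Φ : ℝ → ℝ) (f : α → ℝ) : ℝ :=
  sInf {a : ℝ | 0 < a ∧ ∫⁻ x, ENNReal.ofReal (Φ (|f x| / a)) ∂μ ≤ 1}

open scoped ENNReal NNReal
set_option linter.unusedSectionVars false
set_option linter.unusedTactic false
set_option maxHeartbeats 1000000

namespace OrliczUEM
variable {α : Type*} [MeasurableSpace α] {μ : Measure α} {T : (α → ℝ) → (α → ℝ)}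
variable {α : Type*} [MeasurableSpace α] {μ : Measure α} {T : (α → ℝ) → (α → ℝ)}

theorem T_zero (hsmul : ∀ (c : ℝ) (f : α → ℝ), T (c • f) = c • T f) : T 0 = 0 := by
  have h := hsmul 0 0
  simpa using h

theorem T_mono (hadd : ∀ f g : α → ℝ, T (f + g) = T f + T g)
    (hposT : ∀ f : α → ℝ, (∀ x, 0 ≤ f x) → ∀ x, 0 ≤ T f x)
    {f g : α → ℝ} (h : ∀ x, f x ≤ g x) : ∀ x, T f x ≤ T g x := by
  intro x
  have h1 : T g = T f + T (g - f) := by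
    rw [← hadd]; congr 1; ext y; simp
  have h2 := hposT (g - f) (fun y => by simpa using h y) x
  rw [h1]
  simpa using h2

theorem iter_pos (hposT : ∀ f : α → ℝ, (∀ x, 0 ≤ f x) → ∀ x, 0 ≤ T f x)
    (k : ℕ) {f : α → ℝ} (hf : ∀ x, 0 ≤ f x) : ∀ x, 0 ≤ T^[k] f x := by
  induction k generalizing f with
  | zero => simpa using hf
  | succ k ih => rw [Function.iterate_succ_apply]; exact ih (hposT f hf)

theorem iter_mono (hadd : ∀ f g : α → ℝ, T (f + g) = T f + T g)
    (hposT : ∀ f : α → ℝ, (∀ x, 0 ≤ f x) → ∀ x, 0 ≤ T f x)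
    (k : ℕ) {f g : α → ℝ} (h : ∀ x, f x ≤ g x) : ∀ x, T^[k] f x ≤ T^[k] g x := by
  induction k generalizing f g with
  | zero => simpa using h
  | succ k ih =>
    rw [Function.iterate_succ_apply, Function.iterate_succ_apply]
    exact ih (T_mono hadd hposT h)

theorem iter_add (hadd : ∀ f g : α → ℝ, T (f + g) = T f + T g)
    (k : ℕ) (f g : α → ℝ) : T^[k] (f + g) = T^[k] f + T^[k] g := by
  induction k generalizing f g with
  | zero => simp
  | succ k ih =>
    rw [Function.iterate_succ_apply, Function.iterate_succ_apply,
      Function.iterate_succ_apply, hadd, ih]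

theorem iter_smul (hsmul : ∀ (c : ℝ) (f : α → ℝ), T (c • f) = c • T f)
    (k : ℕ) (c : ℝ) (f : α → ℝ) : T^[k] (c • f) = c • T^[k] f := by
  induction k generalizing f with
  | zero => simp
  | succ k ih =>
    rw [Function.iterate_succ_apply, Function.iterate_succ_apply, hsmul, ih]

theorem iter_integrable
    (hcontr1 : ∀ f : α → ℝ, Integrable f μ →
      Integrable (T f) μ ∧ ∫ x, |T f x| ∂μ ≤ ∫ x, |f x| ∂μ)
    (k : ℕ) {f : α → ℝ} (hf : Integrable f μ) :
    Integrable (T^[k] f) μ ∧ ∫ x, |T^[k] f x| ∂μ ≤ ∫ x, |f x| ∂μ := by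
  induction k generalizing f with
  | zero => exact ⟨hf, le_refl _⟩
  | succ k ih =>
    obtain ⟨h1, h2⟩ := hcontr1 f hf
    obtain ⟨h3, h4⟩ := ih h1
    rw [Function.iterate_succ_apply]
    exact ⟨h3, le_trans h4 h2⟩

theorem iter_eLpNorm
    (hcontrInf : ∀ f : α → ℝ, eLpNorm (T f) ⊤ μ ≤ eLpNorm f ⊤ μ)
    (k : ℕ) (f : α → ℝ) : eLpNorm (T^[k] f) ⊤ μ ≤ eLpNorm f ⊤ μ := by
  induction k generalizing f with
  | zero => simp
  | succ k ih =>
    rw [Function.iterate_succ_apply]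
    exact le_trans (ih (T f)) (hcontrInf f)

theorem T_sum {ι : Type*} (hadd : ∀ f g : α → ℝ, T (f + g) = T f + T g)
    (hsmul : ∀ (c : ℝ) (f : α → ℝ), T (c • f) = c • T f)
    (s : Finset ι) (F : ι → α → ℝ) :
    T (∑ i ∈ s, F i) = ∑ i ∈ s, T (F i) := by
  classical
  induction s using Finset.induction with
  | empty => simpa using T_zero hsmul
  | insert _ _ h ih => rw [Finset.sum_insert h, hadd, ih, Finset.sum_insert h]

theorem integrable_ite_pos {h φ : α → ℝ} (hh : AEStronglyMeasurable h μ)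
    (hφ : Integrable φ μ) :
    Integrable (fun x => if 0 < h x then φ x else 0) μ := by
  obtain ⟨h', h'm, hhe⟩ := hh
  obtain ⟨φ', φ'm, hφe⟩ := hφ.1
  have hmeas : StronglyMeasurable (fun x => if 0 < h' x then φ' x else 0) :=
    StronglyMeasurable.ite (measurableSet_lt measurable_const h'm.measurable) φ'm
      stronglyMeasurable_const
  have haem : AEStronglyMeasurable (fun x => if 0 < h x then φ x else 0) μ := by
    refine ⟨_, hmeas, ?_⟩
    filter_upwards [hhe, hφe] with x h1 h2
    simp only [h1, h2]
  refine Integrable.mono hφ haem (Filter.Eventually.of_forall fun x => ?_)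
  by_cases hx : 0 < h x <;> simp [hx]

theorem integrable_sup' {ι : Type*} (s : Finset ι) (hs : s.Nonempty) (G : ι → α → ℝ)
    (hG : ∀ i, Integrable (G i) μ) :
    Integrable (fun x => s.sup' hs (fun i => G i x)) μ := by
  classical
  induction hs using Finset.Nonempty.cons_induction with
  | singleton i => simpa using hG i
  | cons i s hi hne ih =>
    have heq : (fun x => (Finset.cons i s hi).sup' (Finset.cons_nonempty hi)
        (fun j => G j x)) = fun x => max (G i x) (s.sup' hne fun j => G j x) := by
      ext x
      rw [Finset.sup'_cons]
    rw [heq]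
    exact (hG i).sup ih

/-- Hopf maximal ergodic lemma. -/
theorem hopf (hadd : ∀ f g : α → ℝ, T (f + g) = T f + T g)
    (hsmul : ∀ (c : ℝ) (f : α → ℝ), T (c • f) = c • T f)
    (hposT : ∀ f : α → ℝ, (∀ x, 0 ≤ f x) → ∀ x, 0 ≤ T f x)
    (hcontr1 : ∀ f : α → ℝ, Integrable f μ →
      Integrable (T f) μ ∧ ∫ x, |T f x| ∂μ ≤ ∫ x, |f x| ∂μ)
    (w : α → ℝ) (hw : Integrable w μ) (N : ℕ) (h : α → ℝ)
    (hdef : ∀ x, h x = (range (N+1)).sup' Finset.nonempty_range_add_one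
      (fun n => ∑ k ∈ range n, T^[k] w x)) :
    0 ≤ ∫ x, (if 0 < h x then w x else 0) ∂μ := by
  have hint : ∀ k, Integrable (T^[k] w) μ := fun k => (iter_integrable hcontr1 k hw).1
  have hSfun : ∀ n : ℕ, (fun x => ∑ k ∈ range n, T^[k] w x) = ∑ k ∈ range n, T^[k] w := by
    intro n; ext x; rw [Finset.sum_apply]
  have hSint : ∀ n : ℕ, Integrable (fun x => ∑ k ∈ range n, T^[k] w x) μ :=
    fun n => integrable_finset_sum _ (fun k _ => hint k)
  have hhint : Integrable h μ := by
    have h1 := integrable_sup' (μ := μ) (range (N+1)) Finset.nonempty_range_add_one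
      (fun n x => ∑ k ∈ range n, T^[k] w x) hSint
    refine h1.congr (Filter.Eventually.of_forall fun x => (hdef x).symm)
  have hh0 : ∀ x, 0 ≤ h x := by
    intro x
    rw [hdef x]
    have h1 := Finset.le_sup' (fun n => ∑ k ∈ range n, T^[k] w x)
      (by simp : (0:ℕ) ∈ range (N+1))
    refine le_trans (le_of_eq ?_) h1
    simp
  have hhS : ∀ n ∈ range (N+1), ∀ x, (∑ k ∈ range n, T^[k] w x) ≤ h x := by
    intro n hn x
    rw [hdef x]
    exact Finset.le_sup' (fun n => ∑ k ∈ range n, T^[k] w x) hn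
  have hTh0 : ∀ x, 0 ≤ T h x := hposT h hh0
  have hThint : Integrable (T h) μ := (hcontr1 h hhint).1
  -- recursion
  have hSsucc : ∀ (n : ℕ) (x : α), (∑ k ∈ range (n+1), T^[k] w x)
      = T (fun y => ∑ k ∈ range n, T^[k] w y) x + w x := by
    intro n x
    have h2 : ∀ k : ℕ, T^[k+1] w = T (T^[k] w) := fun k => Function.iterate_succ_apply' T k w
    have h3 : (∑ k ∈ range n, T^[k+1] w x) = T (fun y => ∑ k ∈ range n, T^[k] w y) x := by
      calc ∑ k ∈ range n, T^[k+1] w x = ∑ k ∈ range n, T (T^[k] w) x := by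
            refine Finset.sum_congr rfl fun k _ => by rw [h2]
        _ = (∑ k ∈ range n, T (T^[k] w)) x := by rw [Finset.sum_apply]
        _ = T (∑ k ∈ range n, T^[k] w) x := by rw [T_sum hadd hsmul]
        _ = T (fun y => ∑ k ∈ range n, T^[k] w y) x := by rw [hSfun n]
    rw [Finset.sum_range_succ', h3]
    rfl
  have key : ∀ x, 0 < h x → h x ≤ w x + T h x := by
    intro x hx
    obtain ⟨n, hn, hSn⟩ := Finset.exists_mem_eq_sup' (Finset.nonempty_range_add_one (n := N))
      (fun n => ∑ k ∈ range n, T^[k] w x)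
    rw [← hdef x] at hSn
    match n, hn, hSn with
    | 0, hn, hSn =>
      exfalso
      rw [hSn] at hx
      simp at hx
    | (m+1), hn, hSn =>
      have hm : m ∈ range (N+1) := by
        simp only [Finset.mem_range] at hn ⊢
        omega
      have h1 : h x = T (fun y => ∑ k ∈ range m, T^[k] w y) x + w x := by
        rw [hSn, hSsucc m]
      have h2 : T (fun y => ∑ k ∈ range m, T^[k] w y) x ≤ T h x :=
        T_mono hadd hposT (fun y => hhS m hm y) x
      rw [h1]
      linarith
  have hIW : Integrable (fun x => if 0 < h x then w x else 0) μ :=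
    integrable_ite_pos hhint.1 hw
  have hITh : Integrable (fun x => if 0 < h x then T h x else 0) μ :=
    integrable_ite_pos hhint.1 hThint
  have step1 : ∫ x, h x ∂μ - ∫ x, (if 0 < h x then T h x else 0) ∂μ
      ≤ ∫ x, (if 0 < h x then w x else 0) ∂μ := by
    rw [← integral_sub hhint hITh]
    refine integral_mono (hhint.sub hITh) hIW (fun x => ?_)
    by_cases hx : 0 < h x
    · simp only [hx, if_true, Pi.sub_apply]
      have := key x hx
      linarith
    · simp only [hx, if_false, Pi.sub_apply]
      have hx0 : h x = 0 := le_antisymm (not_lt.mp hx) (hh0 x)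
      simp [hx0]
  have step2 : ∫ x, (if 0 < h x then T h x else 0) ∂μ ≤ ∫ x, T h x ∂μ := by
    refine integral_mono hITh hThint (fun x => ?_)
    by_cases hx : 0 < h x <;> simp [hx, hTh0 x]
  have step3 : ∫ x, T h x ∂μ ≤ ∫ x, h x ∂μ := by
    have h1 : ∫ x, T h x ∂μ ≤ ∫ x, |T h x| ∂μ :=
      integral_mono hThint hThint.abs (fun x => le_abs_self _)
    have h2 := (hcontr1 h hhint).2
    have h3 : ∫ x, |h x| ∂μ = ∫ x, h x ∂μ := by
      congr 1; ext x; exact abs_of_nonneg (hh0 x)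
    linarith
  linarith


/-- weak type (1,1) maximal inequality -/
theorem maximal [SigmaFinite μ]
    (hadd : ∀ f g : α → ℝ, T (f + g) = T f + T g)
    (hsmul : ∀ (c : ℝ) (f : α → ℝ), T (c • f) = c • T f)
    (hposT : ∀ f : α → ℝ, (∀ x, 0 ≤ f x) → ∀ x, 0 ≤ T f x)
    (hcontr1 : ∀ f : α → ℝ, Integrable f μ →
      Integrable (T f) μ ∧ ∫ x, |T f x| ∂μ ≤ ∫ x, |f x| ∂μ)
    (hcontrInf : ∀ f : α → ℝ, eLpNorm (T f) ⊤ μ ≤ eLpNorm f ⊤ μ)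
    (g : α → ℝ) (hg : Integrable g μ) (hg0 : ∀ x, 0 ≤ g x) (ν : ℝ) (hν : 0 < ν) :
    ∃ E : Set α, MeasurableSet E ∧ μ Eᶜ ≤ ENNReal.ofReal ((∫ x, g x ∂μ) / ν) ∧
      ∀ n : ℕ, 0 < n → ∀ x ∈ E, (n:ℝ)⁻¹ * ∑ k ∈ range n, T^[k] g x ≤ ν := by
  classical
  have hint : ∀ k : ℕ, Integrable (T^[k] g) μ := fun k => (iter_integrable hcontr1 k hg).1
  set v : ℕ → α → ℝ := fun k => ((hint k).1).mk (T^[k] g) with hv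
  have hvmeas : ∀ k, Measurable (v k) := fun k => ((hint k).1).stronglyMeasurable_mk.measurable
  have hae1 : ∀ᵐ x ∂μ, ∀ k : ℕ, T^[k] g x = v k x :=
    ae_all_iff.2 fun k => ((hint k).1).ae_eq_mk
  obtain ⟨N₁, hN₁sub, hN₁meas, hN₁0⟩ :=
    exists_measurable_superset_of_null (ae_iff.1 hae1)
  -- bad sets
  set Bset : ℕ → Set α := fun n => {x | ν * (n+1) < ∑ k ∈ range (n+1), v k x} with hBset
  have hBmeas : ∀ n, MeasurableSet (Bset n) := by
    intro n
    exact measurableSet_lt measurable_const (by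
      exact Finset.measurable_sum _ (fun k _ => hvmeas k))
  set Acc : ℕ → Set α := fun N => ⋃ n ∈ Set.Iic N, Bset n with hAcc
  have hAccMeas : ∀ N, MeasurableSet (Acc N) := fun N =>
    MeasurableSet.biUnion (Set.to_countable _) (fun n _ => hBmeas n)
  have hAccMono : Monotone Acc := by
    intro a b hab
    exact Set.biUnion_subset_biUnion_left (Set.Iic_subset_Iic.2 hab)
  -- the key estimate
  have hkey : ∀ N m : ℕ, μ (Acc N ∩ spanningSets μ m) ≤ ENNReal.ofReal ((∫ x, g x ∂μ) / ν) := by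
    intro N m
    set F : Set α := spanningSets μ m with hF
    have hFmeas : MeasurableSet F := measurableSet_spanningSets μ m
    have hFfin : μ F < ⊤ := measure_spanningSets_lt_top μ m
    set χ : α → ℝ := F.indicator (fun _ => (1:ℝ)) with hχ
    have hχint : Integrable χ μ :=
      (integrable_indicator_iff hFmeas).2 (integrableOn_const hFfin.ne)
    have hχ01 : ∀ x, 0 ≤ χ x ∧ χ x ≤ 1 := by
      intro x
      by_cases hx : x ∈ F <;> simp [hχ, Set.indicator_apply, hx]
    set w : α → ℝ := fun x => g x - ν * χ x with hw
    have hwint : Integrable w μ := hg.sub (hχint.const_mul ν)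
    have hwfun : w = g + (-ν) • χ := by
      ext x; simp [hw]; ring
    have hTkw : ∀ (k : ℕ) (x : α), T^[k] w x = T^[k] g x - ν * T^[k] χ x := by
      intro k x
      rw [hwfun, iter_add hadd, iter_smul hsmul]
      simp
      ring
    -- a.e. bound on iterates of χ
    have hχbd : ∀ᵐ x ∂μ, ∀ k : ℕ, T^[k] χ x ≤ 1 := by
      refine ae_all_iff.2 fun k => ?_
      have h1 : eLpNorm χ ⊤ μ ≤ ENNReal.ofReal 1 := by
        have := eLpNorm_le_of_ae_bound (μ := μ) (p := ⊤) (f := χ) (C := 1)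
          (Filter.Eventually.of_forall fun x => by
            rw [Real.norm_eq_abs, abs_of_nonneg (hχ01 x).1]; exact (hχ01 x).2)
        simpa using this
      have h2 : eLpNormEssSup (T^[k] χ) μ ≤ ENNReal.ofReal 1 := by
        rw [← eLpNorm_exponent_top]
        exact le_trans (iter_eLpNorm hcontrInf k χ) h1
      have hae : ∀ᵐ y ∂μ, (‖T^[k] χ y‖₊ : ℝ≥0∞) ≤ eLpNormEssSup (T^[k] χ) μ :=
        ae_le_eLpNormEssSup
      filter_upwards [hae] with x hx
      have h3 : (‖T^[k] χ x‖₊ : ℝ≥0∞) ≤ 1 := by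
        refine le_trans (le_trans hx h2) ?_
        simp
      have h4 : ‖T^[k] χ x‖₊ ≤ (1 : ℝ≥0) := ENNReal.coe_le_one_iff.1 h3
      have h5 : |T^[k] χ x| ≤ 1 := by
        rw [← Real.norm_eq_abs]
        exact_mod_cast h4
      exact le_trans (le_abs_self _) h5
    obtain ⟨N₂, hN₂sub, hN₂meas, hN₂0⟩ :=
      exists_measurable_superset_of_null (ae_iff.1 hχbd)
    -- good set D
    set D : Set α := (Acc N ∩ F) \ (N₁ ∪ N₂) with hD
    have hDmeas : MeasurableSet D :=
      ((hAccMeas N).inter hFmeas).diff (hN₁meas.union hN₂meas)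
    have hDsubF : D ⊆ F := fun x hx => hx.1.2
    have hDfin : μ D < ⊤ := lt_of_le_of_lt (measure_mono hDsubF) hFfin
    -- Hopf function
    set h : α → ℝ := fun x => (range (N+2)).sup' Finset.nonempty_range_add_one
      (fun n => ∑ k ∈ range n, T^[k] w x) with hh
    have hhopf := hopf hadd hsmul hposT hcontr1 w hwint (N+1) h (fun x => rfl)
    have hhaem : AEStronglyMeasurable h μ := by
      have h1 := integrable_sup' (μ := μ) (range (N+2)) Finset.nonempty_range_add_one
        (fun n x => ∑ k ∈ range n, T^[k] w x)
        (fun n => integrable_finset_sum _ (fun k _ => (iter_integrable hcontr1 k hwint).1))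
      exact h1.1
    -- positivity of h on D
    have hDpos : ∀ x ∈ D, 0 < h x := by
      intro x hx
      obtain ⟨⟨hxAcc, hxF⟩, hxbad⟩ := hx
      have hx1 : x ∉ N₁ := fun hc => hxbad (Or.inl hc)
      have hx2 : x ∉ N₂ := fun hc => hxbad (Or.inr hc)
      have huv : ∀ k : ℕ, T^[k] g x = v k x := by
        by_contra hc
        exact hx1 (hN₁sub (by simpa using hc))
      have hχle : ∀ k : ℕ, T^[k] χ x ≤ 1 := by
        by_contra hc
        exact hx2 (hN₂sub (by simpa using hc))
      obtain ⟨n, hnN, hxB⟩ : ∃ n, n ≤ N ∧ x ∈ Bset n := by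
        simp only [hAcc, Set.mem_iUnion, Set.mem_Iic] at hxAcc
        obtain ⟨n, hn1, hn2⟩ := hxAcc
        exact ⟨n, hn1, hn2⟩
      have hsum1 : ν * (n+1) < ∑ k ∈ range (n+1), T^[k] g x := by
        have := hxB
        simp only [hBset, Set.mem_setOf_eq] at this
        calc ν * (n+1) < ∑ k ∈ range (n+1), v k x := this
          _ = ∑ k ∈ range (n+1), T^[k] g x :=
            Finset.sum_congr rfl fun k _ => (huv k).symm
      have hsum2 : ∑ k ∈ range (n+1), ν * T^[k] χ x ≤ ν * (n+1) := by
        calc ∑ k ∈ range (n+1), ν * T^[k] χ x ≤ ∑ k ∈ range (n+1), ν * 1 := by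
              refine Finset.sum_le_sum fun k _ => ?_
              exact mul_le_mul_of_nonneg_left (hχle k) hν.le
          _ = ν * (n+1) := by
            rw [Finset.sum_const, Finset.card_range]
            push_cast
            ring
      have hSw : 0 < ∑ k ∈ range (n+1), T^[k] w x := by
        have : ∑ k ∈ range (n+1), T^[k] w x
            = (∑ k ∈ range (n+1), T^[k] g x) - ∑ k ∈ range (n+1), ν * T^[k] χ x := by
          rw [← Finset.sum_sub_distrib]
          exact Finset.sum_congr rfl fun k _ => hTkw k x
        rw [this]
        linarith
      have hle : ∑ k ∈ range (n+1), T^[k] w x ≤ h x := by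
        rw [hh]
        exact Finset.le_sup' (fun n => ∑ k ∈ range n, T^[k] w x)
          (by simp only [Finset.mem_range]; omega : n + 1 ∈ range (N+2))
      linarith
    -- integral comparisons
    have hIg : Integrable (fun x => if 0 < h x then g x else 0) μ :=
      integrable_ite_pos hhaem hg
    have hIχ : Integrable (fun x => if 0 < h x then ν * χ x else 0) μ :=
      integrable_ite_pos hhaem (hχint.const_mul ν)
    have hsplit : ∫ x, (if 0 < h x then w x else 0) ∂μ
        = ∫ x, (if 0 < h x then g x else 0) ∂μ - ∫ x, (if 0 < h x then ν * χ x else 0) ∂μ := by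
      rw [← integral_sub hIg hIχ]
      congr 1
      ext x
      by_cases hx : 0 < h x <;> simp [hx, hw]
    have hIgle : ∫ x, (if 0 < h x then g x else 0) ∂μ ≤ ∫ x, g x ∂μ := by
      refine integral_mono hIg hg fun x => ?_
      by_cases hx : 0 < h x <;> simp [hx, hg0 x]
    have hind : ∫ x, D.indicator (fun _ => ν) x ∂μ ≤ ∫ x, (if 0 < h x then ν * χ x else 0) ∂μ := by
      refine integral_mono ((integrable_indicator_iff hDmeas).2
        (integrableOn_const hDfin.ne)) hIχ fun x => ?_
      by_cases hx : x ∈ D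
      · have h1 : 0 < h x := hDpos x hx
        have h2 : χ x = 1 := by simp [hχ, Set.indicator_apply, hDsubF hx]
        simp [Set.indicator_apply, hx, h1, h2]
      · have h3 : 0 ≤ (if 0 < h x then ν * χ x else 0) := by
          by_cases hx2 : 0 < h x
          · simp only [hx2, if_true]
            exact mul_nonneg hν.le (hχ01 x).1
          · simp [hx2]
        simp [Set.indicator_apply, hx, h3]
    have hindval : ∫ x, D.indicator (fun _ => ν) x ∂μ = (μ D).toReal * ν := by
      rw [integral_indicator_const (ν) hDmeas]
      simp [smul_eq_mul, Measure.real]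
    have hmuD : (μ D).toReal * ν ≤ ∫ x, g x ∂μ := by
      rw [← hindval]
      calc ∫ x, D.indicator (fun _ => ν) x ∂μ
          ≤ ∫ x, (if 0 < h x then ν * χ x else 0) ∂μ := hind
        _ ≤ ∫ x, (if 0 < h x then g x else 0) ∂μ := by
            have := hhopf
            rw [hsplit] at this
            linarith
        _ ≤ ∫ x, g x ∂μ := hIgle
    have hmuD2 : μ D ≤ ENNReal.ofReal ((∫ x, g x ∂μ) / ν) := by
      rw [← ENNReal.ofReal_toReal hDfin.ne]
      refine ENNReal.ofReal_le_ofReal ?_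
      rw [le_div_iff₀ hν]
      exact hmuD
    -- combine
    calc μ (Acc N ∩ F) ≤ μ (D ∪ (N₁ ∪ N₂)) := by
          refine measure_mono fun x hx => ?_
          by_cases hxb : x ∈ N₁ ∪ N₂
          · exact Or.inr hxb
          · exact Or.inl ⟨hx, hxb⟩
      _ ≤ μ D + μ (N₁ ∪ N₂) := measure_union_le _ _
      _ ≤ μ D + (μ N₁ + μ N₂) := by gcongr; exact measure_union_le _ _
      _ = μ D := by rw [hN₁0, hN₂0]; simp
      _ ≤ ENNReal.ofReal ((∫ x, g x ∂μ) / ν) := hmuD2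
  -- assemble: bound on μ (Acc N), then on the union
  have hAccBound : ∀ N, μ (Acc N) ≤ ENNReal.ofReal ((∫ x, g x ∂μ) / ν) := by
    intro N
    have h1 : Acc N = ⋃ m : ℕ, (Acc N ∩ spanningSets μ m) := by
      rw [← Set.inter_iUnion, iUnion_spanningSets, Set.inter_univ]
    have hmono : Monotone (fun m => Acc N ∩ spanningSets μ m) := fun a b hab =>
      Set.inter_subset_inter_right _ (monotone_spanningSets μ hab)
    rw [h1, hmono.directed_le.measure_iUnion]
    exact iSup_le fun m => hkey N m
  set B : Set α := ⋃ N : ℕ, Acc N with hB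
  have hBbound : μ B ≤ ENNReal.ofReal ((∫ x, g x ∂μ) / ν) := by
    rw [hB, hAccMono.directed_le.measure_iUnion]
    exact iSup_le hAccBound
  refine ⟨(B ∪ N₁)ᶜ, (((MeasurableSet.iUnion hAccMeas).union hN₁meas)).compl, ?_, ?_⟩
  · rw [compl_compl]
    calc μ (B ∪ N₁) ≤ μ B + μ N₁ := measure_union_le _ _
      _ = μ B := by rw [hN₁0]; simp
      _ ≤ ENNReal.ofReal ((∫ x, g x ∂μ) / ν) := hBbound
  · intro n hn x hx
    simp only [Set.mem_compl_iff, Set.mem_union, not_or] at hx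
    obtain ⟨hxB, hxN₁⟩ := hx
    have huv : ∀ k : ℕ, T^[k] g x = v k x := by
      by_contra hc
      exact hxN₁ (hN₁sub (by simpa using hc))
    obtain ⟨m, hm⟩ : ∃ m : ℕ, n = m + 1 := ⟨n - 1, by omega⟩
    have hxA : x ∉ Bset m := by
      intro hc
      exact hxB (Set.mem_iUnion.2 ⟨m, Set.mem_biUnion (Set.mem_Iic.2 le_rfl) hc⟩)
    have h1 : ∑ k ∈ range (m+1), v k x ≤ ν * (m+1) := by
      by_contra hc
      exact hxA (by simp only [hBset, Set.mem_setOf_eq]; linarith)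
    have h2 : ∑ k ∈ range n, T^[k] g x ≤ ν * n := by
      rw [hm]
      push_cast
      calc ∑ k ∈ range (m+1), T^[k] g x = ∑ k ∈ range (m+1), v k x :=
            Finset.sum_congr rfl fun k _ => huv k
        _ ≤ ν * (m+1) := h1
    rw [inv_mul_le_iff₀ (by positivity : (0:ℝ) < n)]
    linarith [h2]


/-- a.e. sup-norm bound on all iterates -/
theorem iter_ae_bound
    (hcontrInf : ∀ f : α → ℝ, eLpNorm (T f) ⊤ μ ≤ eLpNorm f ⊤ μ)
    {f : α → ℝ} {C : ℝ} (hC : 0 ≤ C) (hf : ∀ x, |f x| ≤ C) :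
    ∀ᵐ x ∂μ, ∀ k : ℕ, T^[k] f x ≤ C := by
  refine ae_all_iff.2 fun k => ?_
  have h1 : eLpNorm f ⊤ μ ≤ ENNReal.ofReal C := by
    have := eLpNorm_le_of_ae_bound (μ := μ) (p := ⊤) (f := f) (C := C)
      (Filter.Eventually.of_forall fun x => by rw [Real.norm_eq_abs]; exact hf x)
    simpa using this
  have h2 : eLpNormEssSup (T^[k] f) μ ≤ ENNReal.ofReal C := by
    rw [← eLpNorm_exponent_top]
    exact le_trans (iter_eLpNorm hcontrInf k f) h1
  have hae : ∀ᵐ y ∂μ, (‖T^[k] f y‖₊ : ℝ≥0∞) ≤ eLpNormEssSup (T^[k] f) μ :=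
    ae_le_eLpNormEssSup
  filter_upwards [hae] with x hx
  have h3 : ‖T^[k] f x‖₊ ≤ C.toNNReal := by
    have h5 := le_trans hx h2
    rw [ENNReal.ofReal] at h5
    exact_mod_cast h5
  have h4 : ‖T^[k] f x‖ ≤ C := by
    have h6 := NNReal.coe_le_coe.2 h3
    rwa [coe_nnnorm, Real.coe_toNNReal _ hC] at h6
  exact le_trans (le_abs_self _) (by rwa [Real.norm_eq_abs] at h4)

section Orlicz

theorem phi_nonneg {Φ : ℝ → ℝ} (h0 : Φ 0 = 0) (hpos : ∀ u : ℝ, 0 < u → 0 < Φ u)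
    {u : ℝ} (hu : 0 ≤ u) : 0 ≤ Φ u := by
  rcases eq_or_lt_of_le hu with h | h
  · rw [← h, h0]
  · exact (hpos u h).le

theorem phi_scale {Φ : ℝ → ℝ} (hconv : ConvexOn ℝ (Set.Ici 0) Φ) (h0 : Φ 0 = 0)
    {a u : ℝ} (ha0 : 0 ≤ a) (ha1 : a ≤ 1) (hu : 0 ≤ u) :
    Φ (a * u) ≤ a * Φ u := by
  have := hconv.2 (Set.mem_Ici.2 hu) (Set.mem_Ici.2 (le_refl (0:ℝ)))
    ha0 (by linarith : (0:ℝ) ≤ 1 - a) (by ring)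
  simpa [h0, smul_eq_mul] using this

theorem phi_split {Φ : ℝ → ℝ} (hconv : ConvexOn ℝ (Set.Ici 0) Φ) (h0 : Φ 0 = 0)
    (hpos : ∀ u : ℝ, 0 < u → 0 < Φ u) {d : ℝ} (hd : 0 < d) {u : ℝ} (hu : 0 ≤ u) :
    u ≤ min u d + (d / Φ d) * Φ u := by
  have hΦd : 0 < Φ d := hpos d hd
  by_cases h : u ≤ d
  · have h1 : min u d = u := min_eq_left h
    have h2 : 0 ≤ (d / Φ d) * Φ u :=
      mul_nonneg (div_nonneg hd.le hΦd.le) (phi_nonneg h0 hpos hu)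
    linarith
  · push_neg at h
    have hu' : 0 < u := lt_trans hd h
    have h1 : min u d = d := min_eq_right h.le
    have h2 : Φ d ≤ (d / u) * Φ u := by
      have := phi_scale hconv h0 (div_nonneg hd.le hu'.le)
        ((div_le_one hu').2 h.le) hu'.le
      rwa [div_mul_cancel₀ _ hu'.ne'] at this
    have h3 : u * Φ d ≤ d * Φ u := by
      have := mul_le_mul_of_nonneg_left h2 hu'.le
      calc u * Φ d ≤ u * ((d / u) * Φ u) := this
        _ = d * Φ u := by field_simp
    have h4 : u ≤ (d / Φ d) * Φ u := by
      rw [div_mul_eq_mul_div, le_div_iff₀ hΦd]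
      linarith [h3]
    linarith
end Orlicz

theorem averages_uem_core {Φ : ℝ → ℝ} [SigmaFinite μ]
    (hconv : ConvexOn ℝ (Set.Ici 0) Φ)
    (h0 : Φ 0 = 0)
    (hcont : ContinuousWithinAt Φ (Set.Ici 0) 0)
    (hpos : ∀ u : ℝ, 0 < u → 0 < Φ u)
    (hadd : ∀ f g : α → ℝ, T (f + g) = T f + T g)
    (hsmul : ∀ (c : ℝ) (f : α → ℝ), T (c • f) = c • T f)
    (hposT : ∀ f : α → ℝ, (∀ x, 0 ≤ f x) → ∀ x, 0 ≤ T f x)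
    (hcontr1 : ∀ f : α → ℝ, Integrable f μ →
      Integrable (T f) μ ∧ ∫ x, |T f x| ∂μ ≤ ∫ x, |f x| ∂μ)
    (hcontrInf : ∀ f : α → ℝ, eLpNorm (T f) ⊤ μ ≤ eLpNorm f ⊤ μ) :
    ∀ ε > (0:ℝ), ∀ δ > (0:ℝ), ∃ γ > (0:ℝ), ∀ f : α → ℝ, Measurable f →
      (∃ a : ℝ, 0 < a ∧ ∫⁻ x, ENNReal.ofReal (Φ (|f x| / a)) ∂μ < ⊤) →
      sInf {a : ℝ | 0 < a ∧ ∫⁻ x, ENNReal.ofReal (Φ (|f x| / a)) ∂μ ≤ 1} ≤ γ →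
      ∃ E : Set α, MeasurableSet E ∧ μ Eᶜ ≤ ENNReal.ofReal ε ∧
        ∀ n : ℕ, 0 < n → ∀ x ∈ E,
          |(n : ℝ)⁻¹ * ∑ k ∈ range n, (T^[k] (fun y => |f y|)) x| ≤ δ := by
  -- continuity of Φ on [0,∞), hence measurability of relevant compositions
  have hΦcont : ContinuousOn Φ (Set.Ici 0) := by
    intro u hu
    rcases eq_or_lt_of_le (Set.mem_Ici.1 hu) with h | h
    · rw [← h]; exact hcont
    · have h1 : ContinuousOn Φ (Set.Ioi 0) := by
        have := hconv.continuousOn_interior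
        rwa [interior_Ici] at this
      have h2 : ContinuousAt Φ u := h1.continuousAt (IsOpen.mem_nhds isOpen_Ioi h)
      exact h2.continuousWithinAt
  have hΦmax : Continuous (fun u => Φ (max u 0)) := by
    refine hΦcont.comp_continuous (continuous_id.max continuous_const) fun x => ?_
    simp [Set.mem_Ici]
  intro ε hε δ hδ
  set d : ℝ := δ / 2 with hdd
  have hd : 0 < d := by positivity
  have hΦd : 0 < Φ d := hpos d hd
  set t : ℝ := d / Φ d with ht
  have htpos : 0 < t := div_pos hd hΦd
  set γ : ℝ := min (1/2) (ε * Φ d / 2) with hγdef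
  have hγ : 0 < γ := by
    apply lt_min (by norm_num)
    positivity
  refine ⟨γ, hγ, ?_⟩
  rintro f hf ⟨a₀, ha₀, hfin⟩ hlux
  -- measurability helper
  have hmeas_quot : ∀ c : ℝ, 0 < c → Measurable (fun x => ENNReal.ofReal (Φ (|f x| / c))) := by
    intro c hc
    have h1 : Measurable (fun x => |f x| / c) := hf.abs.div_const c
    have h2 : (fun x => Φ (|f x| / c)) = fun x => Φ (max (|f x| / c) 0) := by
      ext x; congr 1; rw [max_eq_left (by positivity)]
    have h3 : (fun x => ENNReal.ofReal (Φ (|f x| / c)))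
        = fun x => ENNReal.ofReal (Φ (max (|f x| / c) 0)) := by
      funext x; rw [congrFun h2 x]
    rw [h3]
    exact (hΦmax.measurable.comp h1).ennreal_ofReal
  set S : Set ℝ := {a : ℝ | 0 < a ∧ ∫⁻ x, ENNReal.ofReal (Φ (|f x| / a)) ∂μ ≤ 1} with hSdef
  -- S is nonempty
  set C : ℝ≥0∞ := ∫⁻ x, ENNReal.ofReal (Φ (|f x| / a₀)) ∂μ with hC
  set r : ℝ := max 1 C.toReal with hr
  have hr1 : (1:ℝ) ≤ r := le_max_left _ _
  have hr0 : 0 < r := lt_of_lt_of_le one_pos hr1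
  have hSne : S.Nonempty := by
    refine ⟨r * a₀, ⟨by positivity, ?_⟩⟩
    have hpt : ∀ x, ENNReal.ofReal (Φ (|f x| / (r * a₀)))
        ≤ ENNReal.ofReal ((1/r) * Φ (|f x| / a₀)) := by
      intro x
      refine ENNReal.ofReal_le_ofReal ?_
      have heq : |f x| / (r * a₀) = (1/r) * (|f x| / a₀) := by
        field_simp
      rw [heq]
      exact phi_scale hconv h0 (by positivity) (by
        rw [div_le_one hr0]; exact hr1) (by positivity)
    calc ∫⁻ x, ENNReal.ofReal (Φ (|f x| / (r * a₀))) ∂μ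
        ≤ ∫⁻ x, ENNReal.ofReal ((1/r) * Φ (|f x| / a₀)) ∂μ := lintegral_mono hpt
      _ = ∫⁻ x, ENNReal.ofReal (1/r) * ENNReal.ofReal (Φ (|f x| / a₀)) ∂μ := by
          refine lintegral_congr fun x => ?_
          rw [ENNReal.ofReal_mul (by positivity)]
      _ = ENNReal.ofReal (1/r) * C := by
          rw [lintegral_const_mul _ (hmeas_quot a₀ ha₀)]
      _ ≤ ENNReal.ofReal (1/r) * ENNReal.ofReal r := by
          gcongr
          rw [← ENNReal.ofReal_toReal hfin.ne]
          exact ENNReal.ofReal_le_ofReal (le_max_right _ _)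
      _ ≤ 1 := by
          rw [← ENNReal.ofReal_mul (by positivity), one_div,
            inv_mul_cancel₀ hr0.ne']
          simp
  -- extract a good scaling constant a
  have hbdd : BddBelow S := ⟨0, fun b hb => hb.1.le⟩
  have h2γ : sInf S < 2 * γ := lt_of_le_of_lt hlux (by linarith)
  obtain ⟨a, haS, ha2γ⟩ := (csInf_lt_iff hbdd hSne).1 h2γ
  obtain ⟨hapos, hamod⟩ := haS
  have ha1 : a ≤ 1 := by
    have : γ ≤ 1/2 := min_le_left _ _
    linarith
  -- modular bound for f itself
  have hmod : ∫⁻ x, ENNReal.ofReal (Φ (|f x|)) ∂μ ≤ ENNReal.ofReal a := by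
    have hpt : ∀ x, ENNReal.ofReal (Φ (|f x|)) ≤ ENNReal.ofReal (a * Φ (|f x| / a)) := by
      intro x
      refine ENNReal.ofReal_le_ofReal ?_
      have heq : |f x| = a * (|f x| / a) := by
        field_simp
      calc Φ (|f x|) = Φ (a * (|f x| / a)) := by rw [← heq]
        _ ≤ a * Φ (|f x| / a) := phi_scale hconv h0 hapos.le ha1 (by positivity)
    calc ∫⁻ x, ENNReal.ofReal (Φ (|f x|)) ∂μ
        ≤ ∫⁻ x, ENNReal.ofReal (a * Φ (|f x| / a)) ∂μ := lintegral_mono hpt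
      _ = ∫⁻ x, ENNReal.ofReal a * ENNReal.ofReal (Φ (|f x| / a)) ∂μ := by
          refine lintegral_congr fun x => ?_
          rw [ENNReal.ofReal_mul hapos.le]
      _ = ENNReal.ofReal a * ∫⁻ x, ENNReal.ofReal (Φ (|f x| / a)) ∂μ := by
          rw [lintegral_const_mul _ (hmeas_quot a hapos)]
      _ ≤ ENNReal.ofReal a * 1 := by gcongr
      _ = ENNReal.ofReal a := by simp
  -- the integrable Orlicz majorant g
  set g : α → ℝ := fun x => Φ (|f x|) with hgdef
  have hgmeas : Measurable g := by
    have h2 : g = fun x => Φ (max (|f x|) 0) := by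
      ext x; rw [hgdef]; congr 1; rw [max_eq_left (abs_nonneg _)]
    rw [h2]
    exact hΦmax.measurable.comp hf.abs
  have hg0 : ∀ x, 0 ≤ g x := fun x => phi_nonneg h0 hpos (abs_nonneg _)
  have hglint : ∫⁻ x, ENNReal.ofReal (g x) ∂μ ≤ ENNReal.ofReal a := hmod
  have hgint : Integrable g μ := by
    constructor
    · exact hgmeas.aestronglyMeasurable
    · rw [hasFiniteIntegral_iff_norm]
      have heq : ∀ x, ENNReal.ofReal ‖g x‖ = ENNReal.ofReal (g x) := by
        intro x; rw [Real.norm_eq_abs, abs_of_nonneg (hg0 x)]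
      calc ∫⁻ x, ENNReal.ofReal ‖g x‖ ∂μ = ∫⁻ x, ENNReal.ofReal (g x) ∂μ :=
            lintegral_congr heq
        _ ≤ ENNReal.ofReal a := hglint
        _ < ⊤ := ENNReal.ofReal_lt_top
  have hgL1 : ∫ x, g x ∂μ ≤ 2 * γ := by
    have h1 : ∫ x, g x ∂μ = (∫⁻ x, ENNReal.ofReal (g x) ∂μ).toReal :=
      integral_eq_lintegral_of_nonneg_ae (Filter.Eventually.of_forall hg0)
        hgmeas.aestronglyMeasurable
    rw [h1]
    calc (∫⁻ x, ENNReal.ofReal (g x) ∂μ).toReal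
        ≤ (ENNReal.ofReal a).toReal := ENNReal.toReal_mono ENNReal.ofReal_ne_top hglint
      _ = a := ENNReal.toReal_ofReal hapos.le
      _ ≤ 2 * γ := ha2γ.le
  -- apply the maximal inequality at level Φ d
  obtain ⟨E₁, hE₁meas, hE₁c, hE₁bound⟩ :=
    maximal hadd hsmul hposT hcontr1 hcontrInf g hgint hg0 (Φ d) hΦd
  have hE₁c' : μ E₁ᶜ ≤ ENNReal.ofReal ε := by
    refine le_trans hE₁c (ENNReal.ofReal_le_ofReal ?_)
    have h1 : 2 * γ ≤ ε * Φ d := by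
      have : γ ≤ ε * Φ d / 2 := min_le_right _ _
      linarith
    rw [div_le_iff₀ hΦd]
    calc ∫ x, g x ∂μ ≤ 2 * γ := hgL1
      _ ≤ ε * Φ d := h1
  -- the bounded part
  set h' : α → ℝ := fun x => min (|f x|) d with hh'
  have hbd : ∀ᵐ x ∂μ, ∀ k : ℕ, T^[k] h' x ≤ d := by
    refine iter_ae_bound hcontrInf hd.le fun x => ?_
    rw [abs_of_nonneg (le_min (abs_nonneg _) hd.le)]
    exact min_le_right _ _
  obtain ⟨N₂, hN₂sub, hN₂meas, hN₂0⟩ := exists_measurable_superset_of_null (ae_iff.1 hbd)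
  refine ⟨E₁ ∩ N₂ᶜ, hE₁meas.inter hN₂meas.compl, ?_, ?_⟩
  · rw [Set.compl_inter, compl_compl]
    calc μ (E₁ᶜ ∪ N₂) ≤ μ E₁ᶜ + μ N₂ := measure_union_le _ _
      _ = μ E₁ᶜ := by rw [hN₂0, add_zero]
      _ ≤ ENNReal.ofReal ε := hE₁c'
  · rintro n hn x ⟨hxE₁, hxN₂⟩
    have hx2 : ∀ k : ℕ, T^[k] h' x ≤ d := by
      by_contra hc
      exact hxN₂ (hN₂sub (by simpa using hc))
    have havg_g : ∑ k ∈ range n, T^[k] g x ≤ (n : ℝ) * Φ d := by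
      have := hE₁bound n hn x hxE₁
      rw [inv_mul_le_iff₀ (by positivity : (0:ℝ) < (n:ℝ))] at this
      linarith [this]
    have hnonneg : 0 ≤ ∑ k ∈ range n, T^[k] (fun y => |f y|) x :=
      Finset.sum_nonneg fun k _ => iter_pos hposT k (fun y => abs_nonneg (f y)) x
    have hsplit : ∀ y, |f y| ≤ h' y + t * g y := by
      intro y
      exact phi_split hconv h0 hpos hd (abs_nonneg (f y))
    have hcomp : ∀ k : ℕ, T^[k] (fun y => |f y|) x ≤ T^[k] h' x + t * T^[k] g x := by
      intro k
      have h1 := iter_mono hadd hposT k hsplit x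
      have h2 : T^[k] (fun y => h' y + t * g y) = fun y => T^[k] h' y + t * T^[k] g y := by
        have h3 : (fun y => h' y + t * g y) = h' + t • g := by
          ext y; simp [smul_eq_mul]
        rw [h3, iter_add hadd, iter_smul hsmul]
        ext y; simp [smul_eq_mul]
      rw [h2] at h1
      exact h1
    have hsum : ∑ k ∈ range n, T^[k] (fun y => |f y|) x ≤ (n:ℝ) * d + t * ((n:ℝ) * Φ d) := by
      calc ∑ k ∈ range n, T^[k] (fun y => |f y|) x
          ≤ ∑ k ∈ range n, (T^[k] h' x + t * T^[k] g x) :=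
            Finset.sum_le_sum fun k _ => hcomp k
        _ = (∑ k ∈ range n, T^[k] h' x) + t * ∑ k ∈ range n, T^[k] g x := by
            rw [Finset.sum_add_distrib, Finset.mul_sum]
        _ ≤ (n:ℝ) * d + t * ((n:ℝ) * Φ d) := by
            refine add_le_add ?_ ?_
            · calc ∑ k ∈ range n, T^[k] h' x ≤ ∑ k ∈ range n, d :=
                  Finset.sum_le_sum fun k _ => hx2 k
                _ = (n:ℝ) * d := by rw [Finset.sum_const, Finset.card_range]; simp
            · exact mul_le_mul_of_nonneg_left havg_g htpos.le
    have htΦd : t * Φ d = d := div_mul_cancel₀ d hΦd.ne'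
    have hnpos : (0:ℝ) < (n:ℝ) := by positivity
    rw [abs_of_nonneg (mul_nonneg (by positivity) hnonneg)]
    rw [inv_mul_le_iff₀ hnpos]
    calc ∑ k ∈ range n, T^[k] (fun y => |f y|) x
        ≤ (n:ℝ) * d + t * ((n:ℝ) * Φ d) := hsum
      _ = (n:ℝ) * (d + d) := by rw [← mul_assoc, mul_comm t, mul_assoc, htΦd]; ring
      _ = (n:ℝ) * δ := by rw [hdd]; ring


end OrliczUEM

theorem averages_uem_on_orlicz {α : Type*} [MeasurableSpace α] (μ : Measure α) [SigmaFinite μ]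
    (Φ : ℝ → ℝ)
    (hconv : ConvexOn ℝ (Set.Ici 0) Φ)
    (h0 : Φ 0 = 0)
    (hcont : ContinuousWithinAt Φ (Set.Ici 0) 0)
    (hpos : ∀ u : ℝ, 0 < u → 0 < Φ u)
    (T : (α → ℝ) → (α → ℝ))
    (hadd : ∀ f g : α → ℝ, T (f + g) = T f + T g)
    (hsmul : ∀ (c : ℝ) (f : α → ℝ), T (c • f) = c • T f)
    (hposT : ∀ f : α → ℝ, (∀ x, 0 ≤ f x) → ∀ x, 0 ≤ T f x)
    (hcontr1 : ∀ f : α → ℝ, Integrable f μ →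
      Integrable (T f) μ ∧ ∫ x, |T f x| ∂μ ≤ ∫ x, |f x| ∂μ)
    (hcontrInf : ∀ f : α → ℝ, eLpNorm (T f) ⊤ μ ≤ eLpNorm f ⊤ μ) :
    ∀ ε > (0:ℝ), ∀ δ > (0:ℝ), ∃ γ > (0:ℝ), ∀ f : α → ℝ, Measurable f →
      (∃ a : ℝ, 0 < a ∧ ∫⁻ x, ENNReal.ofReal (Φ (|f x| / a)) ∂μ < ⊤) →
      luxemburgNorm μ Φ f ≤ γ →
      ∃ E : Set α, MeasurableSet E ∧ μ Eᶜ ≤ ENNReal.ofReal ε ∧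
        ∀ n : ℕ, 0 < n → ∀ x ∈ E,
          |(n : ℝ)⁻¹ * ∑ k ∈ range n, (T^[k] (fun y => |f y|)) x| ≤ δ := by
  intro ε hε δ hδ
  obtain ⟨γ, hγ, hmain⟩ := OrliczUEM.averages_uem_core (μ := μ) (T := T)
    hconv h0 hcont hpos hadd hsmul hposT hcontr1 hcontrInf ε hε δ hδ
  refine ⟨γ, hγ, fun f hf hex hlux => hmain f hf hex ?_⟩
  rw [luxemburgNorm] at hlux
  exact hlux
end

section
/- Let Φ be a 2-convex Orlicz function, Φ̃(u) = Φ(√u), and suppose the averages A_n of a positive Dunford–Schwartz operator T are uniformly equicontinuous in measure at zero on L^{Φ̃}. Then, using the Cauchy–Schwarz/Kadison inequality A_n(f)² ≤ A_n(f²) (valid for the averages of a positive contraction applied to nonnegative f), the family {A_n} is uniformly equicontinuous in measure at zero on L^Φ: for every ε, δ > 0 there is γ > 0 such that ‖f‖_Φ < γ (f ≥ 0) implies the existence of a set E with μ(Eᶜ) ≤ ε and sup_n ‖A_n(f)χ_E‖_∞ ≤ δ. -/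
open MeasureTheory Finset

lemma lux_sq {α : Type*} [MeasurableSpace α] (μ : Measure α) (Φ : ℝ → ℝ)
    (f : α → ℝ) {γ : ℝ} (hγ : 0 < γ)
    (h : luxemburgNorm μ Φ f < γ) :
    luxemburgNorm μ (fun u => Φ (Real.sqrt u)) (fun x => f x ^ 2) < γ ^ 2 := by
  set S : Set ℝ := {a : ℝ | 0 < a ∧ ∫⁻ x, ENNReal.ofReal (Φ (|f x| / a)) ∂μ ≤ 1} with hS
  set S' : Set ℝ := {a : ℝ | 0 < a ∧
      ∫⁻ x, ENNReal.ofReal (Φ (Real.sqrt (|f x ^ 2| / a))) ∂μ ≤ 1} with hS'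
  have key : ∀ a : ℝ, 0 < a → (a ^ 2 ∈ S' ↔ a ∈ S) := by
    intro a ha
    have heq : ∀ x : α, Real.sqrt (|f x ^ 2| / a ^ 2) = |f x| / a := by
      intro x
      rw [abs_of_nonneg (sq_nonneg _), ← sq_abs, ← div_pow, Real.sqrt_sq (by positivity)]
    constructor
    · rintro ⟨-, h2⟩
      refine ⟨ha, ?_⟩
      simpa only [heq] using h2
    · rintro ⟨-, h2⟩
      refine ⟨by positivity, ?_⟩
      simpa only [heq] using h2
  rcases Set.eq_empty_or_nonempty S with he | hne
  · have he' : S' = ∅ := by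
      ext b; simp only [Set.mem_empty_iff_false, iff_false]
      rintro ⟨hb, h2⟩
      have : Real.sqrt b ∈ S := by
        rw [← key _ (Real.sqrt_pos.2 hb)]
        rw [Real.sq_sqrt hb.le]
        exact ⟨hb, h2⟩
      rw [he] at this; exact this
    show sInf S' < γ ^ 2
    rw [he', Real.sInf_empty]
    positivity
  · obtain ⟨a, haS, halt⟩ := exists_lt_of_csInf_lt hne h
    have ha : 0 < a := haS.1
    have : a ^ 2 ∈ S' := (key a ha).2 haS
    calc sInf S' ≤ a ^ 2 := csInf_le ⟨0, fun b hb => hb.1.le⟩ this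
      _ < γ ^ 2 := by apply pow_lt_pow_left₀ halt ha.le; norm_num

theorem uem_transfer_two_convex {α : Type*} [MeasurableSpace α] (μ : Measure α) [SigmaFinite μ]
    (Φ : ℝ → ℝ)
    (hconv : ConvexOn ℝ (Set.Ici 0) Φ)
    (h0 : Φ 0 = 0)
    (hcont : ContinuousWithinAt Φ (Set.Ici 0) 0)
    (hpos : ∀ u : ℝ, 0 < u → 0 < Φ u)
    (h2conv : ConvexOn ℝ (Set.Ici 0) (fun u => Φ (Real.sqrt u)))
    (T : (α → ℝ) → (α → ℝ))
    (hadd : ∀ f g : α → ℝ, T (f + g) = T f + T g)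
    (hsmul : ∀ (r : ℝ) (f : α → ℝ), T (r • f) = r • T f)
    (hposT : ∀ f : α → ℝ, (∀ x, 0 ≤ f x) → ∀ x, 0 ≤ T f x)
    (hcontr1 : ∀ f : α → ℝ, Integrable f μ →
      Integrable (T f) μ ∧ ∫ x, |T f x| ∂μ ≤ ∫ x, |f x| ∂μ)
    (hcontrInf : ∀ f : α → ℝ, eLpNorm (T f) ⊤ μ ≤ eLpNorm f ⊤ μ)
    -- Kadison/Cauchy–Schwarz inequality for the averages of T applied to nonnegative f
    (hkadison : ∀ f : α → ℝ, (∀ x, 0 ≤ f x) → ∀ n : ℕ, 0 < n → ∀ x : α,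
      ((n : ℝ)⁻¹ * ∑ k ∈ range n, (T^[k] f) x) ^ 2 ≤
        (n : ℝ)⁻¹ * ∑ k ∈ range n, (T^[k] (fun y => f y ^ 2)) x)
    -- uniform equicontinuity in measure at zero on L^{Φ̃}
    (huem : ∀ ε > (0:ℝ), ∀ δ > (0:ℝ), ∃ γ > (0:ℝ), ∀ g : α → ℝ, Measurable g →
      luxemburgNorm μ (fun u => Φ (Real.sqrt u)) g < γ →
      ∃ E : Set α, MeasurableSet E ∧ μ Eᶜ ≤ ENNReal.ofReal ε ∧
        ∀ n : ℕ, 0 < n → ∀ x ∈ E,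
          |(n : ℝ)⁻¹ * ∑ k ∈ range n, (T^[k] g) x| ≤ δ) :
    -- conclusion: uniform equicontinuity in measure at zero on L^Φ
    ∀ ε > (0:ℝ), ∀ δ > (0:ℝ), ∃ γ > (0:ℝ), ∀ f : α → ℝ, Measurable f →
      (∀ x, 0 ≤ f x) → luxemburgNorm μ Φ f < γ →
      ∃ E : Set α, MeasurableSet E ∧ μ Eᶜ ≤ ENNReal.ofReal ε ∧
        ∀ n : ℕ, 0 < n → ∀ x ∈ E,
          |(n : ℝ)⁻¹ * ∑ k ∈ range n, (T^[k] f) x| ≤ δ := by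
  intro ε hε δ hδ
  obtain ⟨γ', hγ', H⟩ := huem ε hε (δ ^ 2) (by positivity)
  refine ⟨Real.sqrt γ', Real.sqrt_pos.2 hγ', ?_⟩
  intro f hf hf0 hlux
  have hlux2 : luxemburgNorm μ (fun u => Φ (Real.sqrt u)) (fun x => f x ^ 2) < γ' := by
    have := lux_sq μ Φ f (Real.sqrt_pos.2 hγ') hlux
    rwa [Real.sq_sqrt hγ'.le] at this
  obtain ⟨E, hEm, hEc, hE⟩ := H (fun x => f x ^ 2) (hf.pow_const 2) hlux2
  refine ⟨E, hEm, hEc, ?_⟩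
  intro n hn x hx
  have h1 := hkadison f hf0 n hn x
  have h2 := hE n hn x hx
  have h3 : ((n : ℝ)⁻¹ * ∑ k ∈ range n, (T^[k] f) x) ^ 2 ≤ δ ^ 2 :=
    h1.trans ((le_abs_self _).trans h2)
  calc |(n : ℝ)⁻¹ * ∑ k ∈ range n, (T^[k] f) x|
      = Real.sqrt (((n : ℝ)⁻¹ * ∑ k ∈ range n, (T^[k] f) x) ^ 2) :=
        (Real.sqrt_sq_eq_abs _).symm
    _ ≤ Real.sqrt (δ ^ 2) := Real.sqrt_le_sqrt h3
    _ = δ := by rw [Real.sqrt_sq hδ.le]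
end
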